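/- In Urysohn's example X = (ℕ × ℤ) ∪ {+∞, −∞} (with the topology described), letting B = {(n, m) : n ∈ ℕ, m > 0}, the θ-closure of B is B ∪ {(n,0) : n ∈ ℕ} ∪ {+∞}, while the θ-closure of cl_θ B additionally contains −∞; hence the θ-closure operator is not idempotent. -/
import Mathlib


/-- The underlying set of Urysohn's example: `ℕ × ℤ` together with `+∞` and `-∞`. -/
inductive Ury where
  | pt : ℕ → ℤ → Ury
  | pinf : Ury
  | ninf : Ury

namespace Ury

/-- Open sets in Urysohn's example. -/
def uryOpen (U : Set Ury) : Prop :=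
  (pinf ∈ U → ∃ k : ℕ, ∀ n > k, ∀ m : ℤ, 0 < m → pt n m ∈ U) ∧
  (ninf ∈ U → ∃ k : ℕ, ∀ n > k, ∀ m : ℤ, m < 0 → pt n m ∈ U) ∧
  (∀ n : ℕ, pt n 0 ∈ U → ∃ k : ℕ, ∀ m : ℤ, (k : ℤ) < |m| → pt n m ∈ U)

instance : TopologicalSpace Ury where
  IsOpen := uryOpen
  isOpen_univ := ⟨fun _ => ⟨0, fun _ _ _ _ => trivial⟩, fun _ => ⟨0, fun _ _ _ _ => trivial⟩,
    fun _ _ => ⟨0, fun _ _ => trivial⟩⟩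
  isOpen_inter := by
    rintro U V ⟨hU1, hU2, hU3⟩ ⟨hV1, hV2, hV3⟩
    refine ⟨?_, ?_, ?_⟩
    · rintro ⟨h1, h2⟩
      obtain ⟨k1, hk1⟩ := hU1 h1
      obtain ⟨k2, hk2⟩ := hV1 h2
      exact ⟨max k1 k2, fun n hn m hm =>
        ⟨hk1 n (lt_of_le_of_lt (le_max_left _ _) hn) m hm,
         hk2 n (lt_of_le_of_lt (le_max_right _ _) hn) m hm⟩⟩
    · rintro ⟨h1, h2⟩
      obtain ⟨k1, hk1⟩ := hU2 h1
      obtain ⟨k2, hk2⟩ := hV2 h2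
      exact ⟨max k1 k2, fun n hn m hm =>
        ⟨hk1 n (lt_of_le_of_lt (le_max_left _ _) hn) m hm,
         hk2 n (lt_of_le_of_lt (le_max_right _ _) hn) m hm⟩⟩
    · rintro n ⟨h1, h2⟩
      obtain ⟨k1, hk1⟩ := hU3 n h1
      obtain ⟨k2, hk2⟩ := hV3 n h2
      refine ⟨max k1 k2, fun m hm => ?_⟩
      push_cast at hm
      exact ⟨hk1 m (lt_of_le_of_lt (by exact_mod_cast le_max_left k1 k2) hm),
             hk2 m (lt_of_le_of_lt (by exact_mod_cast le_max_right k1 k2) hm)⟩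
  isOpen_sUnion := by
    intro S hS
    refine ⟨?_, ?_, ?_⟩
    · rintro ⟨t, ht, hmem⟩
      obtain ⟨k, hk⟩ := (hS t ht).1 hmem
      exact ⟨k, fun n hn m hm => ⟨t, ht, hk n hn m hm⟩⟩
    · rintro ⟨t, ht, hmem⟩
      obtain ⟨k, hk⟩ := (hS t ht).2.1 hmem
      exact ⟨k, fun n hn m hm => ⟨t, ht, hk n hn m hm⟩⟩
    · rintro n ⟨t, ht, hmem⟩
      obtain ⟨k, hk⟩ := (hS t ht).2.2 n hmem
      exact ⟨k, fun m hm => ⟨t, ht, hk m hm⟩⟩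

/-- The H-set `A = {(n,0) : n ∈ ℕ} ∪ {+∞}`. -/
def A : Set Ury := {x | (∃ n : ℕ, x = pt n 0) ∨ x = pinf}

/-- `B = {(n,m) : m > 0}`. -/
def B : Set Ury := {x | ∃ n : ℕ, ∃ m : ℤ, 0 < m ∧ x = pt n m}

end Ury

/-- The θ-closure of a set in a topological space. -/
def thetaCl {Z : Type*} [TopologicalSpace Z] (S : Set Z) : Set Z :=
  {x | ∀ U : Set Z, IsOpen U → x ∈ U → (closure U ∩ S).Nonempty}

namespace Ury

lemma isOpen_iff {U : Set Ury} : IsOpen U ↔ uryOpen U := Iff.rfl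

/-- isolated points -/
lemma isolated_isOpen (n : ℕ) (m : ℤ) (hm : m ≠ 0) : IsOpen ({pt n m} : Set Ury) := by
  rw [isOpen_iff]
  refine ⟨fun h => ?_, fun h => ?_, fun a h => ?_⟩
  · simp at h
  · simp at h
  · simp only [Set.mem_singleton_iff, pt.injEq] at h
    exact absurd h.2.symm hm

/-- The lower open set. -/
def L : Set Ury := {x | x = ninf ∨ ∃ a : ℕ, ∃ b : ℤ, b < 0 ∧ x = pt a b}

lemma L_open : IsOpen L := by
  rw [isOpen_iff]
  refine ⟨fun h => ?_, fun _ => ⟨0, fun n _ m hm => Or.inr ⟨n, m, hm, rfl⟩⟩, fun a h => ?_⟩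
  · rcases h with h | ⟨a, b, _, h⟩ <;> simp_all
  · rcases h with h | ⟨a', b, hb, h⟩ <;> simp_all

lemma notMem_closure_L {y : Ury} (hy : y ∈ B) : y ∉ closure L := by
  obtain ⟨n, m, hm, rfl⟩ := hy
  rw [mem_closure_iff]
  push_neg
  refine ⟨{pt n m}, isolated_isOpen n m hm.ne', rfl, ?_⟩
  rw [Set.eq_empty_iff_forall_notMem]
  rintro x ⟨rfl, hxL⟩
  rcases hxL with h | ⟨a, b, hb, h⟩ <;> simp_all
  omega

/-- The upper open set. -/
def P : Set Ury := insert pinf B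

lemma P_open : IsOpen P := by
  rw [isOpen_iff]
  refine ⟨fun _ => ⟨0, fun n _ m hm => Or.inr ⟨n, m, hm, rfl⟩⟩, fun h => ?_, fun a h => ?_⟩
  · rcases h with h | ⟨a, b, hb, h⟩ <;> simp_all
  · rcases h with h | ⟨a', b, hb, h⟩ <;> simp_all

/-- Punctured neighborhoods of the points `(a,0)`. -/
def V (a k : ℕ) : Set Ury := {x | x = pt a 0 ∨ ∃ j : ℤ, (k : ℤ) < |j| ∧ x = pt a j}

lemma V_open (a k : ℕ) : IsOpen (V a k) := by
  rw [isOpen_iff]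
  refine ⟨fun h => ?_, fun h => ?_, fun a' h => ?_⟩
  · rcases h with h | ⟨j, hj, h⟩ <;> simp_all
  · rcases h with h | ⟨j, hj, h⟩ <;> simp_all
  · refine ⟨k, fun m hm => ?_⟩
    rcases h with h | ⟨j, hj, h⟩ <;>
      simp_all only [pt.injEq] <;> exact Or.inr ⟨m, hm, by simp [h.1]⟩

lemma subset_thetaCl {Z : Type*} [TopologicalSpace Z] (S : Set Z) : S ⊆ thetaCl S :=
  fun x hx _U _ hxU => ⟨x, subset_closure hxU, hx⟩

lemma pt_zero_mem_thetaCl_B (n : ℕ) : pt n 0 ∈ thetaCl B := by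
  intro U hU hxU
  obtain ⟨k, hk⟩ := hU.2.2 n hxU
  refine ⟨pt n (k + 1), subset_closure (hk (k + 1) ?_), n, k + 1, by positivity, rfl⟩
  rw [abs_of_pos (by positivity)]; omega

lemma pinf_mem_thetaCl_B : pinf ∈ thetaCl B := by
  intro U hU hxU
  obtain ⟨k, hk⟩ := hU.1 hxU
  exact ⟨pt (k + 1) 1, subset_closure (hk (k + 1) (by omega) 1 one_pos), k + 1, 1, one_pos, rfl⟩

lemma thetaCl_B_eq : thetaCl B = B ∪ {x | ∃ n : ℕ, x = pt n 0} ∪ {pinf} := by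
  ext x
  constructor
  · intro hx
    match x with
    | pt n m =>
      rcases lt_trichotomy m 0 with hm | rfl | hm
      · exfalso
        obtain ⟨y, hyc, hyB⟩ := hx L L_open (Or.inr ⟨n, m, hm, rfl⟩)
        exact notMem_closure_L hyB hyc
      · exact Or.inl (Or.inr ⟨n, rfl⟩)
      · exact Or.inl (Or.inl ⟨n, m, hm, rfl⟩)
    | pinf => exact Or.inr rfl
    | ninf =>
      exfalso
      obtain ⟨y, hyc, hyB⟩ := hx L L_open (Or.inl rfl)
      exact notMem_closure_L hyB hyc
  · rintro ((hx | ⟨n, rfl⟩) | hx)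
    · exact subset_thetaCl B hx
    · exact pt_zero_mem_thetaCl_B n
    · rw [hx]; exact pinf_mem_thetaCl_B

lemma notMem_closure_singleton {n : ℕ} {m : ℤ} (hm : m < 0) {c : Ury}
    (hc : c ∈ thetaCl B) : c ∉ closure ({pt n m} : Set Ury) := by
  rw [thetaCl_B_eq] at hc
  rw [mem_closure_iff]
  push_neg
  rcases hc with (⟨a, b, hb, rfl⟩ | ⟨a, rfl⟩) | hc
  · refine ⟨{pt a b}, isolated_isOpen a b hb.ne', rfl, ?_⟩
    rw [Set.eq_empty_iff_forall_notMem]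
    rintro x ⟨rfl, hx⟩
    simp_all only [Set.mem_singleton_iff, pt.injEq]
    omega
  · refine ⟨V a m.natAbs, V_open a m.natAbs, Or.inl rfl, ?_⟩
    rw [Set.eq_empty_iff_forall_notMem]
    rintro x ⟨hxV, rfl⟩
    rcases hxV with h | ⟨j, hj, h⟩ <;> simp_all only [pt.injEq]
    · omega
    · rw [Int.abs_eq_natAbs] at hj
      omega
  · rw [hc]
    refine ⟨P, P_open, Or.inl rfl, ?_⟩
    rw [Set.eq_empty_iff_forall_notMem]
    rintro x ⟨hxP, rfl⟩
    rcases hxP with h | ⟨a, b, hb, h⟩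
    · exact Ury.noConfusion h
    · rw [pt.injEq] at h
      omega

lemma ninf_mem_thetaCl2 : ninf ∈ thetaCl (thetaCl B) := by
  intro U hU hxU
  obtain ⟨k, hk⟩ := hU.2.1 hxU
  refine ⟨pt (k + 1) 0, ?_, pt_zero_mem_thetaCl_B (k + 1)⟩
  rw [mem_closure_iff]
  intro o ho hoU
  obtain ⟨k', hk'⟩ := ho.2.2 (k + 1) hoU
  refine ⟨pt (k + 1) (-(k' + 1)), hk' _ ?_, hk (k + 1) (by omega) _ (by omega)⟩
  rw [abs_neg, abs_of_pos (by positivity)]; omega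

lemma thetaCl2_eq : thetaCl (thetaCl B) = thetaCl B ∪ {ninf} := by
  ext x
  constructor
  · intro hx
    match x with
    | pt n m =>
      rcases lt_trichotomy m 0 with hm | rfl | hm
      · exfalso
        obtain ⟨y, hyc, hyC⟩ := hx {pt n m} (isolated_isOpen n m hm.ne) rfl
        exact notMem_closure_singleton hm hyC hyc
      · exact Or.inl (pt_zero_mem_thetaCl_B n)
      · exact Or.inl (subset_thetaCl B ⟨n, m, hm, rfl⟩)
    | pinf => exact Or.inl pinf_mem_thetaCl_B
    | ninf => exact Or.inr rfl
  · rintro (hx | hx)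
    · exact subset_thetaCl _ hx
    · rw [hx]; exact ninf_mem_thetaCl2

end Ury

open Ury in
/-- In Urysohn's example, with `B = {(n,m) : m > 0}`:
`cl_θ B = B ∪ {(n,0)} ∪ {+∞}`, while `cl_θ (cl_θ B) = cl_θ B ∪ {-∞}`;
hence the θ-closure operator is not idempotent. -/
theorem ury_thetaCl_not_idempotent :
    thetaCl Ury.B = Ury.B ∪ {x | ∃ n : ℕ, x = pt n 0} ∪ {pinf} ∧
    thetaCl (thetaCl Ury.B) = thetaCl Ury.B ∪ {ninf} ∧
    thetaCl (thetaCl Ury.B) ≠ thetaCl Ury.B := by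
  refine ⟨thetaCl_B_eq, thetaCl2_eq, ?_⟩
  intro h
  have h1 : ninf ∈ thetaCl (thetaCl Ury.B) := ninf_mem_thetaCl2
  rw [h, thetaCl_B_eq] at h1
  rcases h1 with (⟨a, b, hb, h⟩ | ⟨a, h⟩) | h <;> simp_all
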